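/- Let A be an associative unital ℂ-algebra, m, k ∈ ℂ, and let a, b, c, d, f ∈ A satisfy the G_{m,k} relations. Then the element δ = a·d − b·c + m·a·c satisfies δ = a·d − c·b − m·c·d, and δ commutes with each of a, b, c, d and f. -/
import Mathlib


noncomputable section

/-- The defining relations of the Jordanian quantum group `G_{m,k}` for elements
`a, b, c, d, f` of a unital associative `ℂ`-algebra `A`, with
`δ = a·d − b·c + m·a·c`. -/
def GmkRelations {A : Type*} [Ring A] [Algebra ℂ A] (m k : ℂ) (a b c d f : A) : Prop :=
  c * d - d * c = (-m) • (c * c) ∧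
  c * b - b * c = (-m) • (a * c + c * d) ∧
  c * a - a * c = (-m) • (c * c) ∧
  d * a - a * d = (-m) • ((d - a) * c) ∧
  d * b - b * d = (-m) • (d * d - (a * d - b * c + m • (a * c))) ∧
  b * a - a * b = (-m) • ((a * d - b * c + m • (a * c)) - a * a) ∧
  f * a - a * f = k • (c * f) ∧
  f * b - b * f = k • (d * f - f * a) ∧
  f * c = c * f ∧
  f * d - d * f = (-k) • (c * f)

/-- for generators satisfying the `G_{m,k}` relations, the element
`δ = a·d − b·c + m·a·c` also equals `a·d − c·b − m·c·d` and is central, i.e. it commutes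
with each of `a`, `b`, `c`, `d`, `f`. -/
theorem Gmk_delta_central (A : Type*) [Ring A] [Algebra ℂ A] (m k : ℂ)
    (a b c d f : A) (h : GmkRelations m k a b c d f) :
    (a * d - b * c + m • (a * c) = a * d - c * b - m • (c * d)) ∧
    ((a * d - b * c + m • (a * c)) * a = a * (a * d - b * c + m • (a * c))) ∧
    ((a * d - b * c + m • (a * c)) * b = b * (a * d - b * c + m • (a * c))) ∧
    ((a * d - b * c + m • (a * c)) * c = c * (a * d - b * c + m • (a * c))) ∧
    ((a * d - b * c + m • (a * c)) * d = d * (a * d - b * c + m • (a * c))) ∧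
    ((a * d - b * c + m • (a * c)) * f = f * (a * d - b * c + m • (a * c))) := by
  obtain ⟨h1, h2, h3, h4, h5, h6, h7, h8, h9, h10⟩ := h
  rw [sub_eq_iff_eq_add] at h1 h2 h3 h4 h5 h6 h7 h8 h10
  -- normal-ordering rules: target order a, b, d, c, f
  have hcd : c * d = d * c - m • (c * c) := by rw [h1]; module
  have hca : c * a = a * c - m • (c * c) := by rw [h3]; module
  have hcb : c * b = b * c - m • (a * c) - m • (d * c) + (m * m) • (c * c) := by
    rw [h2, hcd]; module
  have hda : d * a = a * d - m • (d * c) + m • (a * c) := by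
    rw [h4, sub_mul]; module
  have hdb : d * b = b * d - m • (d * d) + m • (a * d) - m • (b * c) + (m * m) • (a * c) := by
    rw [h5]; module
  have hba : b * a = a * b - m • (a * d) + m • (b * c) - (m * m) • (a * c) + m • (a * a) := by
    rw [h6]; module
  have hfa : f * a = a * f + k • (c * f) := by rw [h7]; module
  have hfb : f * b = b * f + k • (d * f) - k • (a * f) - (k * k) • (c * f) := by
    rw [h8, hfa]; module
  have hfd : f * d = d * f - k • (c * f) := by rw [h10]; module
  -- extended forms
  have hcd' : ∀ x : A, c * (d * x) = d * (c * x) - m • (c * (c * x)) := by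
    intro x; rw [← mul_assoc, hcd]; simp only [sub_mul, smul_mul_assoc, mul_assoc]
  have hca' : ∀ x : A, c * (a * x) = a * (c * x) - m • (c * (c * x)) := by
    intro x; rw [← mul_assoc, hca]; simp only [sub_mul, smul_mul_assoc, mul_assoc]
  have hcb' : ∀ x : A, c * (b * x)
      = b * (c * x) - m • (a * (c * x)) - m • (d * (c * x)) + (m * m) • (c * (c * x)) := by
    intro x; rw [← mul_assoc, hcb]
    simp only [sub_mul, add_mul, smul_mul_assoc, mul_assoc]
  have hda' : ∀ x : A, d * (a * x) = a * (d * x) - m • (d * (c * x)) + m • (a * (c * x)) := by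
    intro x; rw [← mul_assoc, hda]
    simp only [sub_mul, add_mul, smul_mul_assoc, mul_assoc]
  have hdb' : ∀ x : A, d * (b * x) = b * (d * x) - m • (d * (d * x)) + m • (a * (d * x))
      - m • (b * (c * x)) + (m * m) • (a * (c * x)) := by
    intro x; rw [← mul_assoc, hdb]
    simp only [sub_mul, add_mul, smul_mul_assoc, mul_assoc]
  have hba' : ∀ x : A, b * (a * x) = a * (b * x) - m • (a * (d * x)) + m • (b * (c * x))
      - (m * m) • (a * (c * x)) + m • (a * (a * x)) := by
    intro x; rw [← mul_assoc, hba]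
    simp only [sub_mul, add_mul, smul_mul_assoc, mul_assoc]
  have hfa' : ∀ x : A, f * (a * x) = a * (f * x) + k • (c * (f * x)) := by
    intro x; rw [← mul_assoc, hfa]
    simp only [sub_mul, add_mul, smul_mul_assoc, mul_assoc]
  have hfb' : ∀ x : A, f * (b * x) = b * (f * x) + k • (d * (f * x)) - k • (a * (f * x))
      - (k * k) • (c * (f * x)) := by
    intro x; rw [← mul_assoc, hfb]
    simp only [sub_mul, add_mul, smul_mul_assoc, mul_assoc]
  have hfc' : ∀ x : A, f * (c * x) = c * (f * x) := by
    intro x; rw [← mul_assoc, h9, mul_assoc]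
  have hfd' : ∀ x : A, f * (d * x) = d * (f * x) - k • (c * (f * x)) := by
    intro x; rw [← mul_assoc, hfd]
    simp only [sub_mul, add_mul, smul_mul_assoc, mul_assoc]
  refine ⟨?_, ?_, ?_, ?_, ?_, ?_⟩ <;>
  · simp only [mul_add, add_mul, mul_sub, sub_mul, smul_mul_assoc, mul_smul_comm,
      smul_add, smul_sub, smul_smul, mul_assoc,
      hcd, hca, hcb, hda, hdb, hba, hfa, hfb, h9, hfd,
      hcd', hca', hcb', hda', hdb', hba', hfa', hfb', hfc', hfd']
    module
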